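/- Let S : ℕ → ℝ with S(r) > 0, and define S̃(r) = S(r) + r·S(r-1) (with S(-1) = 0), V(r) = ∑_{i=0}^r S(i), Ṽ(r) = ∑_{i=0}^r S̃(i). If ∑_{r=0}^∞ V(r)/S(r+1) < ∞ and ∑_{r=1}^∞ r·V(r-1)/((r+1)·S(r)) < ∞, then ∑_{r=0}^∞ Ṽ(r)/S̃(r+1) < ∞. -/

import Mathlib

theorem stmt_14 (S St : ℕ → ℝ) (hS : ∀ r, 0 < S r)
    (hSt0 : St 0 = S 0)
    (hSt : ∀ r, St (r + 1) = S (r + 1) + ((r : ℝ) + 1) * S r)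
    (h1 : Summable (fun r => (∑ i ∈ Finset.range (r + 1), S i) / S (r + 1)))
    (h2 : Summable (fun r : ℕ => ((r : ℝ) + 1) *
      (∑ i ∈ Finset.range (r + 1), S i) / (((r : ℝ) + 2) * S (r + 1)))) :
    Summable (fun r => (∑ i ∈ Finset.range (r + 1), St i) / St (r + 1)) := by
  -- g : shifted version of h2's terms
  set g : ℕ → ℝ := fun r => match r with
    | 0 => 0
    | k + 1 => ((k : ℝ) + 1) * (∑ i ∈ Finset.range (k + 1), S i) /
        (((k : ℝ) + 2) * S (k + 1)) with hg
  have hgsum : Summable g := by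
    rw [← (summable_nat_add_iff 1)]
    exact h2
  have hStpos : ∀ r, 0 < St r := by
    intro r
    cases r with
    | zero => rw [hSt0]; exact hS 0
    | succ k =>
      rw [hSt]
      nlinarith [hS (k+1), hS k, Nat.cast_nonneg (α := ℝ) k]
  have hVpos : ∀ r, 0 < ∑ i ∈ Finset.range (r + 1), S i := by
    intro r
    exact Finset.sum_pos (fun i _ => hS i) ⟨0, Finset.mem_range.mpr (Nat.succ_pos r)⟩
  -- partial sums of St
  have hsum : ∀ r, ∑ i ∈ Finset.range (r + 1), St i =
      (∑ i ∈ Finset.range (r + 1), S i) + ∑ j ∈ Finset.range r, ((j : ℝ) + 1) * S j := by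
    intro r
    induction r with
    | zero => simp [hSt0]
    | succ k ih =>
      rw [Finset.sum_range_succ, ih, hSt k,
        Finset.sum_range_succ (f := fun i => S i) (n := k + 1),
        Finset.sum_range_succ (f := fun j => ((j : ℝ) + 1) * S j) (n := k)]
      push_cast
      ring
  apply Summable.of_nonneg_of_le
    (f := fun r => (∑ i ∈ Finset.range (r + 1), S i) / S (r + 1) + g r)
  · intro r
    exact div_nonneg (Finset.sum_nonneg fun i _ => (hStpos i).le) (hStpos _).le
  · intro r
    have hA : ∑ j ∈ Finset.range r, ((j : ℝ) + 1) * S j ≤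
        (r : ℝ) * ∑ j ∈ Finset.range r, S j := by
      rw [Finset.mul_sum]
      apply Finset.sum_le_sum
      intro j hj
      have : (j : ℝ) + 1 ≤ (r : ℝ) := by
        exact_mod_cast Nat.succ_le_of_lt (Finset.mem_range.mp hj)
      exact mul_le_mul_of_nonneg_right this (hS j).le
    have hApos : 0 ≤ ∑ j ∈ Finset.range r, ((j : ℝ) + 1) * S j :=
      Finset.sum_nonneg fun j _ => mul_nonneg (by positivity) (hS j).le
    have hc : 0 < S (r + 1) := hS _
    have hd : 0 < ((r : ℝ) + 1) * S r := mul_pos (by positivity) (hS r)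
    have key : (∑ i ∈ Finset.range (r + 1), St i) / St (r + 1) ≤
        (∑ i ∈ Finset.range (r + 1), S i) / S (r + 1) +
        (∑ j ∈ Finset.range r, ((j : ℝ) + 1) * S j) / (((r : ℝ) + 1) * S r) := by
      rw [hsum r, hSt r]
      have h1' : (∑ i ∈ Finset.range (r + 1), S i) / (S (r + 1) + ((r : ℝ) + 1) * S r) ≤
          (∑ i ∈ Finset.range (r + 1), S i) / S (r + 1) :=
        div_le_div_of_nonneg_left (hVpos r).le hc (by linarith)
      have h2' : (∑ j ∈ Finset.range r, ((j : ℝ) + 1) * S j) /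
          (S (r + 1) + ((r : ℝ) + 1) * S r) ≤
          (∑ j ∈ Finset.range r, ((j : ℝ) + 1) * S j) / (((r : ℝ) + 1) * S r) := by
        apply div_le_div_of_nonneg_left hApos hd (by linarith)
      calc ((∑ i ∈ Finset.range (r + 1), S i) + ∑ j ∈ Finset.range r, ((j : ℝ) + 1) * S j) /
            (S (r + 1) + ((r : ℝ) + 1) * S r)
          = (∑ i ∈ Finset.range (r + 1), S i) / (S (r + 1) + ((r : ℝ) + 1) * S r) +
            (∑ j ∈ Finset.range r, ((j : ℝ) + 1) * S j) / (S (r + 1) + ((r : ℝ) + 1) * S r) := by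
            rw [add_div]
        _ ≤ _ := add_le_add h1' h2'
    refine key.trans (add_le_add le_rfl ?_)
    cases r with
    | zero => simp [hg]
    | succ k =>
      show (∑ j ∈ Finset.range (k + 1), ((j : ℝ) + 1) * S j) /
          ((↑(k + 1) + 1) * S (k + 1)) ≤
          ((k : ℝ) + 1) * (∑ i ∈ Finset.range (k + 1), S i) /
          (((k : ℝ) + 2) * S (k + 1))
      have hcast : ((k + 1 : ℕ) : ℝ) + 1 = (k : ℝ) + 2 := by push_cast; ring
      rw [hcast]
      have hA' : ∑ j ∈ Finset.range (k + 1), ((j : ℝ) + 1) * S j ≤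
          ((k : ℝ) + 1) * ∑ i ∈ Finset.range (k + 1), S i := by
        have : ((k + 1 : ℕ) : ℝ) = (k : ℝ) + 1 := by push_cast; ring
        rw [← this]; exact hA
      have hden : (0 : ℝ) < ((k : ℝ) + 2) * S (k + 1) :=
        mul_pos (by positivity) (hS (k + 1))
      gcongr
  · exact h1.add hgsum
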